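/- arXiv:2404.18482 — 2 statements merged into one kernel-verified Lean document; each statement's English description precedes it below -/
import Mathlib

section
/- Let n ≥ 2 and suppose c_{m,j} (m ≥ 0, 0 ≤ j ≤ 2m, with c_{m,j} := 0 for j outside this range) satisfy c_{0,0} = 1 and the recurrence c_{m+1,j} = −λ² c_{m,j−2} + iλ(n−j) c_{m,j−1} + (1 + λ² − j(j−1)) c_{m,j} + (−iλ(j+1) + j(j+1)) c_{m,j+1}, where λ ≥ 1. Then there is a constant C depending only on n (any C with C² ≥ 2(n+2) works) such that |c_{m,j}| ≤ C^{2m+1} (2m)! λ^{2m} for all m and j. -/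
set_option maxHeartbeats 1000000 in
/-- Let `n ≥ 2`, `λ ≥ 1`, and let `c_{m,j}` (extended by zero outside
`0 ≤ j ≤ 2m`) satisfy `c_{0,0} = 1` and the recurrence
`c_{m+1,j} = −λ² c_{m,j−2} + iλ(n−j) c_{m,j−1} + (1+λ²−j(j−1)) c_{m,j}
+ (−iλ(j+1)+j(j+1)) c_{m,j+1}`. Then for any `C` with `C² ≥ 2(n+2)`
(i.e. `√(2(n+2)) ≤ C`) one has `|c_{m,j}| ≤ C^{2m+1} (2m)! λ^{2m}` for all m, j. -/
theorem stmt_8 (n : ℕ) (hn : 2 ≤ n) (lam : ℝ) (hlam : 1 ≤ lam)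
    (c : ℕ → ℤ → ℂ)
    (h00 : c 0 0 = 1)
    (hzero : ∀ (m : ℕ) (j : ℤ), (j < 0 ∨ (2 * m : ℤ) < j) → c m j = 0)
    (hrec : ∀ (m : ℕ) (j : ℤ),
      c (m + 1) j
        = -(lam : ℂ) ^ 2 * c m (j - 2)
          + Complex.I * (lam : ℂ) * ((n : ℂ) - (j : ℂ)) * c m (j - 1)
          + (1 + (lam : ℂ) ^ 2 - (j : ℂ) * ((j : ℂ) - 1)) * c m j
          + (-Complex.I * (lam : ℂ) * ((j : ℂ) + 1) + (j : ℂ) * ((j : ℂ) + 1)) * c m (j + 1)) :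
    ∀ C : ℝ, Real.sqrt (2 * (n + 2)) ≤ C →
      ∀ (m : ℕ) (j : ℤ), ‖c m j‖ ≤ C ^ (2 * m + 1) * (2 * m).factorial * lam ^ (2 * m) := by

  intro C hC
  have hn' : (2:ℝ) ≤ n := by exact_mod_cast hn
  have hs0 : (0:ℝ) ≤ 2 * ((n:ℝ) + 2) := by positivity
  have hC1 : (1:ℝ) ≤ C := by
    refine le_trans ?_ hC
    rw [show (1:ℝ) = Real.sqrt 1 by simp]
    exact Real.sqrt_le_sqrt (by nlinarith)
  have hC0 : (0:ℝ) ≤ C := by linarith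
  have hCsq : 2 * ((n:ℝ) + 2) ≤ C ^ 2 := by
    have h := Real.sq_sqrt hs0
    have h2 := Real.sqrt_nonneg (2 * ((n:ℝ) + 2))
    nlinarith [mul_self_nonneg (C - Real.sqrt (2 * ((n:ℝ) + 2)))]
  have hlam0 : (0:ℝ) < lam := by linarith
  intro m
  induction m with
  | zero =>
    intro j
    rcases eq_or_ne j 0 with rfl | hj
    · rw [h00]
      simpa using hC1
    · rw [hzero 0 j (by omega)]
      simp only [norm_zero]
      positivity
  | succ m ih =>
    intro j
    set B : ℝ := C ^ (2 * m + 1) * (2 * m).factorial * lam ^ (2 * m) with hB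
    have hB0 : 0 ≤ B := by positivity
    have hm0 : (0:ℝ) ≤ (m:ℝ) := by positivity
    have key : ∀ (a : ℂ) (j' : ℤ) (K : ℝ), 0 ≤ K →
        (0 ≤ j' → j' ≤ 2 * (m:ℤ) → ‖a‖ ≤ K) → ‖a * c m j'‖ ≤ K * B := by
      intro a j' K hK h
      by_cases hr : 0 ≤ j' ∧ j' ≤ 2 * (m:ℤ)
      · rw [norm_mul]
        exact mul_le_mul (h hr.1 hr.2) (ih j') (norm_nonneg _) hK
      · rw [hzero m j' (by omega), mul_zero, norm_zero]
        positivity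
    have hb1 : ‖-(lam:ℂ)^2 * c m (j-2)‖ ≤ lam^2 * B := by
      apply key _ _ _ (by positivity)
      intro _ _
      rw [norm_neg, norm_pow, Complex.norm_real, Real.norm_eq_abs, abs_of_pos hlam0]
    have hb2 : ‖Complex.I * (lam:ℂ) * ((n:ℂ) - (j:ℂ)) * c m (j-1)‖
        ≤ (lam * ((n:ℝ) + 2*m)) * B := by
      apply key _ _ _ (by positivity)
      intro h0 h1
      have hj1 : (1:ℝ) ≤ (j:ℝ) := by exact_mod_cast (by omega : (1:ℤ) ≤ j)
      have hj2 : (j:ℝ) ≤ 2*(m:ℝ) + 1 := by exact_mod_cast (by omega : j ≤ 2*(m:ℤ) + 1)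
      have e : Complex.I * (lam:ℂ) * ((n:ℂ) - (j:ℂ))
          = (((lam * ((n:ℝ) - (j:ℝ))) : ℝ) : ℂ) * Complex.I := by push_cast; ring
      rw [e, norm_mul, Complex.norm_I, mul_one, Complex.norm_real, Real.norm_eq_abs,
        abs_mul, abs_of_pos hlam0]
      have : |(n:ℝ) - (j:ℝ)| ≤ (n:ℝ) + 2*m := by
        rw [abs_le]; constructor <;> nlinarith
      nlinarith
    have hb3 : ‖(1 + (lam:ℂ)^2 - (j:ℂ) * ((j:ℂ) - 1)) * c m j‖
        ≤ (1 + lam^2 + 4*(m:ℝ)^2) * B := by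
      apply key _ _ _ (by positivity)
      intro h0 h1
      have hj1 : (0:ℝ) ≤ (j:ℝ) := by exact_mod_cast h0
      have hj2 : (j:ℝ) ≤ 2*(m:ℝ) := by exact_mod_cast h1
      have hjj : (0:ℝ) ≤ (j:ℝ) * ((j:ℝ) - 1) := by
        have : (0:ℤ) ≤ j * (j - 1) := by
          rcases le_or_gt j 0 with h | h
          · nlinarith
          · nlinarith
        exact_mod_cast this
      have e : (1 + (lam:ℂ)^2 - (j:ℂ) * ((j:ℂ) - 1))
          = (((1 + lam^2 - (j:ℝ) * ((j:ℝ) - 1)) : ℝ) : ℂ) := by push_cast; ring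
      rw [e, Complex.norm_real, Real.norm_eq_abs, abs_le]
      constructor <;> nlinarith
    have hb4 : ‖(-Complex.I * (lam:ℂ) * ((j:ℂ) + 1) + (j:ℂ) * ((j:ℂ) + 1)) * c m (j+1)‖
        ≤ (lam * (2*(m:ℝ)) + 4*(m:ℝ)^2) * B := by
      apply key _ _ _ (by positivity)
      intro h0 h1
      have hj1 : (0:ℝ) ≤ (j:ℝ) + 1 := by exact_mod_cast (by omega : (0:ℤ) ≤ j + 1)
      have hj2 : (j:ℝ) + 1 ≤ 2*(m:ℝ) := by exact_mod_cast (by omega : j + 1 ≤ 2*(m:ℤ))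
      have hjj : (0:ℝ) ≤ (j:ℝ) * ((j:ℝ) + 1) := by
        have : (0:ℤ) ≤ j * (j + 1) := by
          rcases le_or_gt j 0 with h | h
          · nlinarith
          · nlinarith
        exact_mod_cast this
      have e : (-Complex.I * (lam:ℂ) * ((j:ℂ) + 1) + (j:ℂ) * ((j:ℂ) + 1))
          = (((( (j:ℝ) * ((j:ℝ) + 1)) : ℝ) : ℂ))
            + (((-(lam * ((j:ℝ) + 1))) : ℝ) : ℂ) * Complex.I := by push_cast; ring
      rw [e]
      refine (norm_add_le _ _).trans ?_
      rw [norm_mul, Complex.norm_I, mul_one, Complex.norm_real, Complex.norm_real,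
        Real.norm_eq_abs, Real.norm_eq_abs, abs_of_nonneg hjj, abs_neg, abs_mul,
        abs_of_pos hlam0, abs_of_nonneg hj1]
      nlinarith
    rw [hrec m j]
    have hfact : (((2*(m+1)).factorial : ℕ) : ℝ)
        = (2*(m:ℝ)+2) * (2*(m:ℝ)+1) * ((2*m).factorial : ℕ) := by
      rw [show 2*(m+1) = (2*m+1)+1 by ring, Nat.factorial_succ, Nat.factorial_succ]
      push_cast; ring
    have hKsum : lam^2 + lam * ((n:ℝ) + 2*m) + (1 + lam^2 + 4*(m:ℝ)^2)
        + (lam * (2*(m:ℝ)) + 4*(m:ℝ)^2)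
        ≤ C^2 * lam^2 * ((2*(m:ℝ)+2) * (2*(m:ℝ)+1)) := by
      have h1 : lam ≤ lam^2 := by nlinarith
      have h2 : (1:ℝ) ≤ lam^2 := by nlinarith
      have hq : (0:ℝ) ≤ (2*(m:ℝ)+2) * (2*(m:ℝ)+1) := by positivity
      have hA : (n:ℝ) + 3 + 4*m + 8*(m:ℝ)^2
          ≤ 2*((n:ℝ)+2) * ((2*(m:ℝ)+2) * (2*(m:ℝ)+1)) := by nlinarith
      have hB2 : 2*((n:ℝ)+2) * ((2*(m:ℝ)+2) * (2*(m:ℝ)+1))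
          ≤ C^2 * ((2*(m:ℝ)+2) * (2*(m:ℝ)+1)) := mul_le_mul_of_nonneg_right hCsq hq
      have hS := hA.trans hB2
      have hL : lam^2 + lam * ((n:ℝ) + 2*m) + (1 + lam^2 + 4*(m:ℝ)^2)
          + (lam * (2*(m:ℝ)) + 4*(m:ℝ)^2)
          ≤ lam^2 * ((n:ℝ) + 3 + 4*m + 8*(m:ℝ)^2) := by
        nlinarith [mul_nonneg (sub_nonneg.mpr h1) hm0,
          mul_nonneg (sub_nonneg.mpr h2) (sq_nonneg (m:ℝ)),
          mul_nonneg (sub_nonneg.mpr h1) (by positivity : (0:ℝ) ≤ (n:ℝ)),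
          sub_nonneg.mpr h2]
      calc lam^2 + lam * ((n:ℝ) + 2*m) + (1 + lam^2 + 4*(m:ℝ)^2)
            + (lam * (2*(m:ℝ)) + 4*(m:ℝ)^2)
          ≤ lam^2 * ((n:ℝ) + 3 + 4*m + 8*(m:ℝ)^2) := hL
        _ ≤ lam^2 * (C^2 * ((2*(m:ℝ)+2) * (2*(m:ℝ)+1))) :=
            mul_le_mul_of_nonneg_left hS (sq_nonneg lam)
        _ = C^2 * lam^2 * ((2*(m:ℝ)+2) * (2*(m:ℝ)+1)) := by ring
    calc ‖-(lam:ℂ)^2 * c m (j-2)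
          + Complex.I * (lam:ℂ) * ((n:ℂ) - (j:ℂ)) * c m (j-1)
          + (1 + (lam:ℂ)^2 - (j:ℂ) * ((j:ℂ) - 1)) * c m j
          + (-Complex.I * (lam:ℂ) * ((j:ℂ) + 1) + (j:ℂ) * ((j:ℂ) + 1)) * c m (j+1)‖
        ≤ ‖-(lam:ℂ)^2 * c m (j-2)‖
          + ‖Complex.I * (lam:ℂ) * ((n:ℂ) - (j:ℂ)) * c m (j-1)‖
          + ‖(1 + (lam:ℂ)^2 - (j:ℂ) * ((j:ℂ) - 1)) * c m j‖
          + ‖(-Complex.I * (lam:ℂ) * ((j:ℂ) + 1) + (j:ℂ) * ((j:ℂ) + 1)) * c m (j+1)‖ := by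
          refine (norm_add_le _ _).trans (add_le_add ?_ le_rfl)
          refine (norm_add_le _ _).trans (add_le_add ?_ le_rfl)
          exact norm_add_le _ _
      _ ≤ lam^2 * B + (lam * ((n:ℝ) + 2*m)) * B + (1 + lam^2 + 4*(m:ℝ)^2) * B
          + (lam * (2*(m:ℝ)) + 4*(m:ℝ)^2) * B :=
          add_le_add (add_le_add (add_le_add hb1 hb2) hb3) hb4
      _ = (lam^2 + lam * ((n:ℝ) + 2*m) + (1 + lam^2 + 4*(m:ℝ)^2)
          + (lam * (2*(m:ℝ)) + 4*(m:ℝ)^2)) * B := by ring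
      _ ≤ (C^2 * lam^2 * ((2*(m:ℝ)+2) * (2*(m:ℝ)+1))) * B :=
          mul_le_mul_of_nonneg_right hKsum hB0
      _ = C ^ (2 * (m+1) + 1) * ((2 * (m+1)).factorial : ℕ) * lam ^ (2 * (m+1)) := by
          rw [hfact, hB, show 2*(m+1)+1 = 2+(2*m+1) by ring, pow_add,
            show 2*(m+1) = 2+2*m by ring, pow_add]
          ring
end

section
/- Let X, Y be Hilbert spaces, T : X → Y a compact injective linear operator with singular values σ₁ ≥ σ₂ ≥ … and let (φ_j) be an orthonormal basis of X. Fix γ₀ ≥ 1 and suppose σ_j(T) ≤ min{h₁, h₂ exp(−μ j^β)} for all j, with h₁, h₂, μ, β > 0. If ω : ℝ₊ → ℝ₊ is non-decreasing and ‖f‖_X ≤ ω(‖Tf‖_Y) for all f with Σ_j j^{2γ₀} |⟨f, φ_j⟩|² ≤ 1, then for all 0 < t < min{h₁ 2^{−γ₀}, h₂ e^{−μ}} one has ω(t) ≥ max{ h₁^{−1} t , 2^{−γ₀} μ^{γ₀/β} (log h₂ + log(1/t))^{−γ₀/β} }. -/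
open scoped RealInnerProductSpace

/-- Abstract instability lemma. `T : X → Y` is a compact injective linear operator
between Hilbert spaces with singular values `σ₁ ≥ σ₂ ≥ ⋯` (`σ N` is the `N`-th
singular value for `N ≥ 1`, and `φ j` represents the basis vector `φ_{j+1}`). The Courant min-max input is:
for every `N ≥ 1` and `ε > 0` there is `f ∈ span{φ₁,…,φ_N}` with `‖f‖ = ε` and
`‖Tf‖ ≤ σ_N ε`.  If `σ_j ≤ min{h₁, h₂ e^{−μ j^β}}` and `‖f‖ ≤ ω(‖Tf‖)` whenever
`Σ_j j^{2γ₀}|⟨f,φ_j⟩|² ≤ 1`, then for `0 < t < min{h₁2^{−γ₀}, h₂e^{−μ}}`,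
`ω(t) ≥ max{h₁⁻¹ t, 2^{−γ₀} μ^{γ₀/β} (log h₂ + log(1/t))^{−γ₀/β}}`. -/
theorem stmt_9 {X Y : Type*}
    [NormedAddCommGroup X] [InnerProductSpace ℝ X] [CompleteSpace X]
    [NormedAddCommGroup Y] [InnerProductSpace ℝ Y] [CompleteSpace Y]
    (T : X →L[ℝ] Y) (hinj : Function.Injective T) (hcomp : IsCompactOperator T)
    (φ : HilbertBasis ℕ ℝ X)
    (σ : ℕ → ℝ) (hσmono : ∀ j k : ℕ, 1 ≤ j → j ≤ k → σ k ≤ σ j)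
    (γ₀ h₁ h₂ μ β : ℝ) (hγ : 1 ≤ γ₀) (hh₁ : 0 < h₁) (hh₂ : 0 < h₂)
    (hμ : 0 < μ) (hβ : 0 < β)
    (hσb : ∀ j : ℕ, 1 ≤ j → σ j ≤ min h₁ (h₂ * Real.exp (-μ * (j : ℝ) ^ β)))
    (hspec : ∀ N : ℕ, 1 ≤ N → ∀ ε : ℝ, 0 < ε →
      ∃ f : X, f ∈ Submodule.span ℝ ((fun j => φ j) '' {j : ℕ | j < N}) ∧ ‖f‖ = ε ∧ ‖T f‖ ≤ σ N * ε)
    (ω : ℝ → ℝ) (hω : ∀ s t : ℝ, 0 ≤ s → s ≤ t → ω s ≤ ω t)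
    (hstab : ∀ f : X,
      (∑' j : ℕ, ((j : ℝ) + 1) ^ (2 * γ₀) * ⟪f, φ j⟫ ^ 2) ≤ 1 → ‖f‖ ≤ ω ‖T f‖) :
    ∀ t : ℝ, 0 < t → t < min (h₁ * 2 ^ (-γ₀)) (h₂ * Real.exp (-μ)) →
      max (h₁⁻¹ * t)
          ((2 : ℝ) ^ (-γ₀) * μ ^ (γ₀ / β) *
            (Real.log h₂ + Real.log (1 / t)) ^ (-(γ₀ / β)))
        ≤ ω t := by
  intro t ht htlt
  have ht1 := lt_of_lt_of_le htlt (min_le_left _ _)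
  have ht2 := lt_of_lt_of_le htlt (min_le_right _ _)
  -- key lemma
  have key : ∀ N : ℕ, 1 ≤ N → ∀ ε : ℝ, 0 < ε → ε ≤ (N : ℝ) ^ (-γ₀) →
      σ N * ε ≤ t → ε ≤ ω t := by
    intro N hN ε hε hεN hσε
    obtain ⟨f, hfspan, hfnorm, hfT⟩ := hspec N hN ε hε
    have hNpos : (0 : ℝ) < (N : ℝ) := by exact_mod_cast hN
    -- coefficients vanish for j ≥ N
    have hc0g : ∀ g, g ∈ Submodule.span ℝ ((fun j => φ j) '' {j : ℕ | j < N}) →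
        ∀ j : ℕ, N ≤ j → ⟪g, φ j⟫ = 0 := by
      intro g hg j hj
      induction hg using Submodule.span_induction with
      | mem x hx =>
        obtain ⟨i, hi, rfl⟩ := hx
        have hiN : i < N := hi
        exact φ.orthonormal.2 (by omega : i ≠ j)
      | zero => simp
      | add x y hx hy ihx ihy => simp [inner_add_left, ihx, ihy]
      | smul c x hx ihx => simp [inner_smul_left, ihx]
    have hc0 : ∀ j : ℕ, N ≤ j → ⟪f, φ j⟫ = 0 := hc0g f hfspan
    -- Parseval over the support
    have hpars : (∑ j ∈ Finset.range N, ⟪f, φ j⟫ ^ 2) = ‖f‖ ^ 2 := by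
      have h1 : (∑' j : ℕ, ⟪f, φ j⟫ * ⟪φ j, f⟫) = ⟪f, f⟫ := φ.tsum_inner_mul_inner f f
      have h2 : (∑' j : ℕ, ⟪f, φ j⟫ * ⟪φ j, f⟫) = ∑ j ∈ Finset.range N, ⟪f, φ j⟫ * ⟪φ j, f⟫ :=
        tsum_eq_sum (by
          intro j hj
          rw [hc0 j (by simpa using hj)]; ring)
      rw [h2, real_inner_self_eq_norm_sq] at h1
      rw [← h1]
      refine Finset.sum_congr rfl fun j _ => ?_
      rw [real_inner_comm f (φ j)]; ring
    -- the smoothness condition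
    have hcond : (∑' j : ℕ, ((j : ℝ) + 1) ^ (2 * γ₀) * ⟪f, φ j⟫ ^ 2) ≤ 1 := by
      have h2 : (∑' j : ℕ, ((j : ℝ) + 1) ^ (2 * γ₀) * ⟪f, φ j⟫ ^ 2)
          = ∑ j ∈ Finset.range N, ((j : ℝ) + 1) ^ (2 * γ₀) * ⟪f, φ j⟫ ^ 2 :=
        tsum_eq_sum (by
          intro j hj
          rw [hc0 j (by simpa using hj)]; ring)
      rw [h2]
      have hb : (∑ j ∈ Finset.range N, ((j : ℝ) + 1) ^ (2 * γ₀) * ⟪f, φ j⟫ ^ 2)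
          ≤ ∑ j ∈ Finset.range N, (N : ℝ) ^ (2 * γ₀) * ⟪f, φ j⟫ ^ 2 := by
        refine Finset.sum_le_sum fun j hj => ?_
        have hjN : (j : ℝ) + 1 ≤ (N : ℝ) := by
          have : j + 1 ≤ N := Finset.mem_range.mp hj
          exact_mod_cast this
        exact mul_le_mul_of_nonneg_right
          (Real.rpow_le_rpow (by positivity) hjN (by positivity)) (sq_nonneg _)
      rw [← Finset.mul_sum, hpars, hfnorm] at hb
      refine hb.trans ?_
      have hε2 : ε ^ 2 ≤ ((N : ℝ) ^ (-γ₀)) ^ 2 := by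
        exact pow_le_pow_left₀ hε.le hεN 2
      calc (N : ℝ) ^ (2 * γ₀) * ε ^ 2
          ≤ (N : ℝ) ^ (2 * γ₀) * ((N : ℝ) ^ (-γ₀)) ^ 2 :=
            mul_le_mul_of_nonneg_left hε2 (Real.rpow_nonneg hNpos.le _)
        _ = 1 := by
            have hz : (2:ℝ) * γ₀ + -γ₀ * ((2:ℕ):ℝ) = 0 := by push_cast; ring
            rw [← Real.rpow_natCast ((N : ℝ) ^ (-γ₀)) 2, ← Real.rpow_mul hNpos.le,
              ← Real.rpow_add hNpos, hz, Real.rpow_zero]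
    have h3 : ‖f‖ ≤ ω ‖T f‖ := hstab f hcond
    have h4 : ω ‖T f‖ ≤ ω t := hω _ _ (norm_nonneg _) (hfT.trans hσε)
    rw [hfnorm] at h3
    exact h3.trans h4
  refine max_le ?_ ?_
  · -- bound 1 : N = 1, ε = h₁⁻¹ * t
    have hεpos : 0 < h₁⁻¹ * t := by positivity
    refine key 1 le_rfl (h₁⁻¹ * t) hεpos ?_ ?_
    · rw [Nat.cast_one, Real.one_rpow]
      have h2le : (2 : ℝ) ^ (-γ₀) ≤ 1 :=
        Real.rpow_le_one_of_one_le_of_nonpos one_le_two (by linarith)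
      have : t ≤ h₁ := le_trans ht1.le (by nlinarith)
      rw [inv_mul_le_iff₀ hh₁, mul_one]
      exact this
    · have hσ1 : σ 1 ≤ h₁ := le_trans (hσb 1 le_rfl) (min_le_left _ _)
      calc σ 1 * (h₁⁻¹ * t) ≤ h₁ * (h₁⁻¹ * t) := mul_le_mul_of_nonneg_right hσ1 hεpos.le
        _ = t := by field_simp
  · -- bound 2
    set L : ℝ := Real.log h₂ + Real.log (1 / t) with hLdef
    have hLlog : L = Real.log (h₂ / t) := by
      rw [hLdef, Real.log_div hh₂.ne' ht.ne', Real.log_div one_ne_zero ht.ne', Real.log_one]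
      ring
    have hμL : μ < L := by
      rw [hLlog]
      rw [Real.lt_log_iff_exp_lt (by positivity)]
      rw [lt_div_iff₀ ht]
      calc Real.exp μ * t = t * Real.exp μ := by ring
        _ < h₂ * Real.exp (-μ) * Real.exp μ := by
            exact mul_lt_mul_of_pos_right ht2 (Real.exp_pos μ)
        _ = h₂ := by rw [mul_assoc, ← Real.exp_add]; simp
    have hLpos : 0 < L := lt_trans hμ hμL
    set A : ℝ := (L / μ) ^ (1 / β) with hAdef
    have hLμ1 : 1 < L / μ := (one_lt_div hμ).mpr hμL
    have hA1 : 1 < A := by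
      rw [hAdef]
      rw [Real.one_lt_rpow_iff_of_pos (by positivity)]
      left; exact ⟨hLμ1, by positivity⟩
    have hApos : (0 : ℝ) < A := lt_trans one_pos hA1
    set N : ℕ := ⌈A⌉₊ with hNdef
    have hN1 : 1 ≤ N := Nat.one_le_ceil_iff.mpr hApos
    have hNA : A ≤ (N : ℝ) := Nat.le_ceil A
    have hNpos : (0 : ℝ) < (N : ℝ) := lt_of_lt_of_le hApos hNA
    have hN2A : (N : ℝ) ≤ 2 * A := by
      have := Nat.ceil_lt_add_one hApos.le
      rw [← hNdef] at this
      linarith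
    have hAg : A ^ (-γ₀) = μ ^ (γ₀ / β) * L ^ (-(γ₀ / β)) := by
      rw [hAdef, ← Real.rpow_mul (le_of_lt (div_pos hLpos hμ)),
        show 1 / β * -γ₀ = -(γ₀ / β) by field_simp,
        Real.rpow_neg (le_of_lt (div_pos hLpos hμ)),
        Real.div_rpow hLpos.le hμ.le, inv_div, div_eq_mul_inv,
        Real.rpow_neg hLpos.le]
    refine key N hN1 ((2:ℝ) ^ (-γ₀) * μ ^ (γ₀ / β) * L ^ (-(γ₀ / β))) (by positivity) ?_ ?_
    · -- RHS₂ = (2A)^(-γ₀) ≤ N^(-γ₀)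
      have hAeq : (2 : ℝ) ^ (-γ₀) * μ ^ (γ₀ / β) * L ^ (-(γ₀ / β)) = (2 * A) ^ (-γ₀) := by
        rw [Real.mul_rpow (by norm_num) hApos.le, hAg, mul_assoc]
      rw [hAeq]
      exact Real.rpow_le_rpow_of_nonpos (by positivity) hN2A (by linarith)
    · -- σ N * ε ≤ t
      have hσN : σ N ≤ t := by
        have h1 : σ N ≤ h₂ * Real.exp (-μ * (N : ℝ) ^ β) :=
          le_trans (hσb N hN1) (min_le_right _ _)
        have hNβ : L / μ ≤ (N : ℝ) ^ β := by
          have h2 : A ^ β ≤ (N : ℝ) ^ β := Real.rpow_le_rpow hApos.le hNA hβ.le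
          rwa [hAdef, ← Real.rpow_mul (by positivity), one_div_mul_cancel hβ.ne',
            Real.rpow_one] at h2
        have h3 : -μ * (N : ℝ) ^ β ≤ -L := by
          have : L ≤ μ * (N : ℝ) ^ β := by
            rw [div_le_iff₀ hμ] at hNβ; linarith
          linarith
        have h4 : Real.exp (-μ * (N : ℝ) ^ β) ≤ Real.exp (-L) := Real.exp_le_exp.mpr h3
        have h5 : h₂ * Real.exp (-L) = t := by
          rw [hLlog, Real.exp_neg, Real.exp_log (by positivity)]
          field_simp
        calc σ N ≤ h₂ * Real.exp (-μ * (N : ℝ) ^ β) := h1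
          _ ≤ h₂ * Real.exp (-L) := mul_le_mul_of_nonneg_left h4 hh₂.le
          _ = t := h5
      have hεle1 : (2:ℝ) ^ (-γ₀) * μ ^ (γ₀ / β) * L ^ (-(γ₀ / β)) ≤ 1 := by
        have hAeq : (2 : ℝ) ^ (-γ₀) * μ ^ (γ₀ / β) * L ^ (-(γ₀ / β)) = (2 * A) ^ (-γ₀) := by
          rw [Real.mul_rpow (by norm_num) hApos.le, hAg, mul_assoc]
        rw [hAeq]
        exact Real.rpow_le_one_of_one_le_of_nonpos (by linarith) (by linarith)
      calc σ N * ((2:ℝ) ^ (-γ₀) * μ ^ (γ₀ / β) * L ^ (-(γ₀ / β)))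
          ≤ t * ((2:ℝ) ^ (-γ₀) * μ ^ (γ₀ / β) * L ^ (-(γ₀ / β))) :=
            mul_le_mul_of_nonneg_right hσN (by positivity)
        _ ≤ t * 1 := mul_le_mul_of_nonneg_left hεle1 ht.le
        _ = t := mul_one t
end
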